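/- For two partially entanglement-breaking channels with parameters p, q, the classical-trajectory entanglement-assisted capacity is C_{E,C}(p,q) = 2 + (1−p−q+2pq)·log₂(1−p−q+2pq) + (p+q−2pq)·log₂(p+q−2pq), and C_{E,C}(p,q) < 2 whenever p, q ∈ (0,1) with p + q − 2pq ∉ {0,1}. -/
import Mathlib


noncomputable def H (x : ℝ) : ℝ := -(x * Real.logb 2 x) - (1 - x) * Real.logb 2 (1 - x)

/-- General entanglement-assisted classical capacity over the classical trajectory
of two Pauli channels with error probabilities `(p0,p1,p2,p3)` and `(q0,q1,q2,q3)`. -/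
noncomputable def CEC (p0 p1 p2 p3 q0 q1 q2 q3 : ℝ) : ℝ :=
  2 + (p0*q0 + p1*q1 + p2*q2 + p3*q3) * Real.logb 2 (p0*q0 + p1*q1 + p2*q2 + p3*q3)
    + (p0*q1 + p1*q0 + p2*q3 + p3*q2) * Real.logb 2 (p0*q1 + p1*q0 + p2*q3 + p3*q2)
    + (p0*q2 + p2*q0 + p3*q1 + p1*q3) * Real.logb 2 (p0*q2 + p2*q0 + p3*q1 + p1*q3)
    + (p0*q3 + p3*q0 + p1*q2 + p2*q1) * Real.logb 2 (p0*q3 + p3*q0 + p1*q2 + p2*q1)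

/-- General entanglement-assisted classical capacity over the quantum trajectory
(quantum switch) of two Pauli channels. -/
noncomputable def CEQ (p0 p1 p2 p3 q0 q1 q2 q3 : ℝ) : ℝ :=
  2 + H ((p0*q0 + p1*q1 + p2*q2 + p3*q3) + (p0*q1 + p1*q0) + (p0*q2 + p2*q0) + (p0*q3 + p3*q0))
    + (p0*q0 + p1*q1 + p2*q2 + p3*q3) * Real.logb 2 (p0*q0 + p1*q1 + p2*q2 + p3*q3)
    + (p0*q1 + p1*q0) * Real.logb 2 (p0*q1 + p1*q0)
    + (p0*q2 + p2*q0) * Real.logb 2 (p0*q2 + p2*q0)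
    + (p0*q3 + p3*q0) * Real.logb 2 (p0*q3 + p3*q0)
    + (p2*q3 + p3*q2) * Real.logb 2 (p2*q3 + p3*q2)
    + (p3*q1 + p1*q3) * Real.logb 2 (p3*q1 + p1*q3)
    + (p1*q2 + p2*q1) * Real.logb 2 (p1*q2 + p2*q1)

theorem stmt_10 (p q : ℝ) (hp0 : 0 < p) (hp1 : p < 1) (hq0 : 0 < q) (hq1 : q < 1)
    (h0 : p + q - 2*p*q ≠ 0) (h1 : p + q - 2*p*q ≠ 1) :
    CEC 0 (1 - p) p 0 0 (1 - q) q 0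
      = 2 + (1 - p - q + 2*p*q) * Real.logb 2 (1 - p - q + 2*p*q)
          + (p + q - 2*p*q) * Real.logb 2 (p + q - 2*p*q)
    ∧ CEC 0 (1 - p) p 0 0 (1 - q) q 0 < 2 := by
  have hB : 0 < p + q - 2*p*q := by nlinarith
  have hA : 0 < 1 - p - q + 2*p*q := by nlinarith
  have hA1 : 1 - p - q + 2*p*q < 1 := by nlinarith
  have hB1 : p + q - 2*p*q < 1 := by nlinarith
  have heq : CEC 0 (1 - p) p 0 0 (1 - q) q 0
      = 2 + (1 - p - q + 2*p*q) * Real.logb 2 (1 - p - q + 2*p*q)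
          + (p + q - 2*p*q) * Real.logb 2 (p + q - 2*p*q) := by
    unfold CEC
    have e1 : (0*0 + (1-p)*(1-q) + p*q + 0*0 : ℝ) = 1 - p - q + 2*p*q := by ring
    have e2 : (0*(1-q) + (1-p)*0 + p*0 + 0*q : ℝ) = 0 := by ring
    have e3 : (0*q + p*0 + 0*(1-q) + (1-p)*0 : ℝ) = 0 := by ring
    have e4 : (0*0 + 0*0 + (1-p)*q + p*(1-q) : ℝ) = p + q - 2*p*q := by ring
    rw [e1, e2, e3, e4]
    simp
  refine ⟨heq, ?_⟩
  rw [heq]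
  have l1 : Real.logb 2 (1 - p - q + 2*p*q) < 0 := Real.logb_neg (by norm_num) hA hA1
  have l2 : Real.logb 2 (p + q - 2*p*q) < 0 := Real.logb_neg (by norm_num) hB hB1
  nlinarith [mul_pos hA (neg_pos.mpr l1), mul_pos hB (neg_pos.mpr l2)]
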